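/- Let n ≥ 1 and let k_1,…,k_n be positive integers. Then ∑_{σ ∈ S_n} ζ_𝒜(k_{σ(1)},…,k_{σ(n)}) = 0 in 𝒜, where the sum runs over all permutations σ of {1,…,n}. -/

import Mathlib

open scoped BigOperators

/-- The product of `ℤ/pℤ` over all primes `p`. -/
abbrev PreA : Type := ∀ p : Nat.Primes, ZMod p

/-- The ideal of families that vanish for all but finitely many primes. -/
def nullIdeal : Ideal PreA where
  carrier := {f | {p | f p ≠ 0}.Finite}
  zero_mem' := by simp
  add_mem' := by
    intro f g hf hg
    refine (hf.union hg).subset fun p hp => ?_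
    by_contra hc
    simp only [Set.mem_union, Set.mem_setOf_eq, not_or, not_not] at hc
    exact hp (by simp [Set.mem_setOf_eq, hc.1, hc.2])
  smul_mem' := by
    intro c f hf
    refine hf.subset fun p hp => ?_
    simp only [Set.mem_setOf_eq] at hp ⊢
    intro h0
    exact hp (by simp [h0])

/-- The ring `𝒜 = (∏_p ℤ/pℤ)/(⊕_p ℤ/pℤ)`. -/
abbrev A : Type := PreA ⧸ nullIdeal

/-- `zetaSum p ks b` is `∑_{b > m₁ > ⋯ > m_n ≥ 1} ∏ mᵢ^{-kᵢ}` in `ℤ/pℤ`. -/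
def zetaSum (p : ℕ) : List ℕ → ℕ → ZMod p
  | [], _ => 1
  | k :: ks, b => ∑ m ∈ Finset.Ico 1 b, ((m : ZMod p)⁻¹) ^ k * zetaSum p ks m

/-- `zetaStarSum p ks b` is `∑_{b > m₁ ≥ ⋯ ≥ m_n ≥ 1} ∏ mᵢ^{-kᵢ}` in `ℤ/pℤ`. -/
def zetaStarSum (p : ℕ) : List ℕ → ℕ → ZMod p
  | [], _ => 1
  | k :: ks, b => ∑ m ∈ Finset.Ico 1 b, ((m : ZMod p)⁻¹) ^ k * zetaStarSum p ks (m + 1)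

/-- The finite multiple zeta value `ζ_𝒜(k₁,…,k_n)`. -/
def zetaA (ks : List ℕ) : A :=
  Ideal.Quotient.mk nullIdeal (fun p => zetaSum p ks p)

/-- The finite multiple zeta-star value `ζ⋆_𝒜(k₁,…,k_n)`. -/
def zetaStarA (ks : List ℕ) : A :=
  Ideal.Quotient.mk nullIdeal (fun p => zetaStarSum p ks p)

/-- `ℋ¹ = ℚ⟨z₁,z₂,…⟩`, the noncommutative polynomial algebra on variables `z_k`, `k ≥ 1`. -/
abbrev H1 : Type := MonoidAlgebra ℚ (FreeMonoid ℕ+)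

/-- The monomial (word) `z_{k₁} ⋯ z_{k_n}` in `ℋ¹`. -/
noncomputable def word (w : List ℕ+) : H1 :=
  MonoidAlgebra.of ℚ (FreeMonoid ℕ+) (FreeMonoid.ofList w)

/-- Shuffle product on words (with values in `ℋ¹`). -/
noncomputable def shuffleW : List ℕ+ → List ℕ+ → H1
  | [], w => word w
  | v, [] => word v
  | k :: v, l :: w => word [k] * shuffleW v (l :: w) + word [l] * shuffleW (k :: v) w
  termination_by v w => v.length + w.length
  decreasing_by all_goals first | (simp; omega) | simp | omega

/-- The shuffle product `ш` on `ℋ¹`, as the bilinear extension of `shuffleW`. -/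
noncomputable def shuffle (x y : H1) : H1 :=
  Finsupp.sum x.coeff fun v c => Finsupp.sum y.coeff fun w c' =>
    (c * c') • shuffleW (FreeMonoid.toList v) (FreeMonoid.toList w)

/-- Harmonic product on words (with values in `ℋ¹`). -/
noncomputable def harmW : List ℕ+ → List ℕ+ → H1
  | [], w => word w
  | v, [] => word v
  | k :: v, l :: w =>
      word [k] * harmW v (l :: w) + word [l] * harmW (k :: v) w
        + word [k + l] * harmW v w
  termination_by v w => v.length + w.length
  decreasing_by all_goals first | (simp; omega) | simp | omega

/-- The harmonic product `*` on `ℋ¹`, as the bilinear extension of `harmW`. -/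
noncomputable def harm (x y : H1) : H1 :=
  Finsupp.sum x.coeff fun v c => Finsupp.sum y.coeff fun w c' =>
    (c * c') • harmW (FreeMonoid.toList v) (FreeMonoid.toList w)

/-- Star-harmonic product on words (with values in `ℋ¹`). -/
noncomputable def harmStarW : List ℕ+ → List ℕ+ → H1
  | [], w => word w
  | v, [] => word v
  | k :: v, l :: w =>
      word [k] * harmStarW v (l :: w) + word [l] * harmStarW (k :: v) w
        - word [k + l] * harmStarW v w
  termination_by v w => v.length + w.length
  decreasing_by all_goals first | (simp; omega) | simp | omega

/-- The product `∗̄` on `ℋ¹`, as the bilinear extension of `harmStarW`. -/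
noncomputable def harmStar (x y : H1) : H1 :=
  Finsupp.sum x.coeff fun v c => Finsupp.sum y.coeff fun w c' =>
    (c * c') • harmStarW (FreeMonoid.toList v) (FreeMonoid.toList w)

/-- The image of a rational number in `𝒜`. -/
def ratA (q : ℚ) : A :=
  Ideal.Quotient.mk nullIdeal (fun p => (q.num : ZMod p) * ((q.den : ZMod p))⁻¹)

/-- The `ℚ`-linear map `Z_𝒜 : ℋ¹ → 𝒜` sending `z_{k₁} ⋯ z_{k_n}` to `ζ_𝒜(k₁,…,k_n)`. -/
noncomputable def ZA (x : H1) : A :=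
  Finsupp.sum x.coeff fun w c => ratA c * zetaA ((FreeMonoid.toList w).map (fun k => (k : ℕ)))

/-- The `ℚ`-linear map `Z̄_𝒜 : ℋ¹ → 𝒜` sending `z_{k₁} ⋯ z_{k_n}` to `ζ⋆_𝒜(k₁,…,k_n)`. -/
noncomputable def ZSA (x : H1) : A :=
  Finsupp.sum x.coeff fun w c => ratA c * zetaStarA ((FreeMonoid.toList w).map (fun k => (k : ℕ)))

/-- Sum of a list of positive integers (equal to the actual sum for nonempty lists). -/
def psum : List ℕ+ → ℕ+
  | [] => 1
  | k :: t => t.foldl (· + ·) k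

/-- The map `d` on words: `d(z_{k₁}⋯z_{k_n}) = ∑_{m} ∑_{0=i₀<⋯<i_m=n}
`z_{k_{i₀+1}+⋯+k_{i₁}} ⋯ z_{k_{i_{m-1}+1}+⋯+k_{i_m}}`. -/
noncomputable def dW (w : List ℕ+) : H1 :=
  ∑ c : Composition w.length, word ((w.splitWrtComposition c).map psum)

/-- `z_a` for a tuple `a = (a₁,…,a_m; b₁,…,b_m; c₁,…,c_n) ∈ I_{m,n}`:
`∑_{σ,τ ∈ S_m} z_{a_{σ(1)}} z_{b_{τ(1)}} ⋯ z_{a_{σ(m)}} z_{b_{τ(m)}} ш z_{c₁} ш ⋯ ш z_{c_n}`. -/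
noncomputable def zTuple {m n : ℕ} (a b : Fin m → ℕ+) (c : Fin n → ℕ+) : H1 :=
  ∑ σ : Equiv.Perm (Fin m), ∑ τ : Equiv.Perm (Fin m),
    (List.ofFn c).foldl (fun w k => shuffle w (word [k]))
      (word ((List.ofFn (fun i => [a (σ i), b (τ i)])).flatten))

/-- The statement `P_{m,n}`: `Z_𝒜(z_a) = Z̄_𝒜(z_a) = 0` for all `a ∈ I_{m,n}`. -/
def Pmn (m n : ℕ) : Prop :=
  ∀ (a b : Fin m → ℕ+) (c : Fin n → ℕ+),
    (∀ i, Odd (a i : ℕ)) → (∀ i, Odd (b i : ℕ)) → (∀ j, Even (c j : ℕ)) →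
    ZA (zTuple a b c) = 0 ∧ ZSA (zTuple a b c) = 0

/-- The list `{c}^{n₀}, a, {c}^{n₁}, b, {c}^{n₂}, …, a, {c}^{n_{2m-1}}, b, {c}^{n_{2m}}`. -/
def bbList (a b c : ℕ) (m : ℕ) (f : Fin (2 * m + 1) → ℕ) : List ℕ :=
  (List.ofFn (fun j : Fin m =>
      List.replicate (f ⟨2 * j.val, by have := j.isLt; omega⟩) c ++ [a]
        ++ List.replicate (f ⟨2 * j.val + 1, by have := j.isLt; omega⟩) c ++ [b])).flatten
    ++ List.replicate (f ⟨2 * m, by omega⟩) c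


section AuxMZV
open Finset

theorem sumS_eq_zero (p : ℕ) [Fact p.Prime] [NeZero p] (kk : ℕ) (h0 : 0 < kk) (h1 : kk < p - 1) :
    (∑ m ∈ Finset.Ico 1 p, ((m : ZMod p)⁻¹) ^ kk) = 0 := by
  classical
  have hp : 1 < p := (Fact.out : p.Prime).one_lt
  have h : (∑ m ∈ Finset.Ico 1 p, ((m : ZMod p)⁻¹) ^ kk) = ∑ x ∈ (Finset.univ : Finset (ZMod p)) \ {0}, (x⁻¹) ^ kk := by
    refine Finset.sum_nbij' (fun m => (m : ZMod p)) (fun x => x.val) ?_ ?_ ?_ ?_ ?_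
    · intro m hm
      simp only [Finset.mem_Ico] at hm
      simp only [Finset.mem_sdiff, Finset.mem_univ, Finset.mem_singleton, true_and]
      intro hc
      have := ZMod.val_cast_of_lt (show m < p from hm.2)
      rw [hc, ZMod.val_zero] at this
      omega
    · intro x hx
      simp only [Finset.mem_sdiff, Finset.mem_univ, Finset.mem_singleton, true_and] at hx
      have : x.val < p := ZMod.val_lt x
      have hne : x.val ≠ 0 := by
        intro hc
        exact hx ((ZMod.val_eq_zero x).mp hc)
      simp only [Finset.mem_Ico]; omega
    · intro m hm
      simp only [Finset.mem_Ico] at hm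
      exact ZMod.val_cast_of_lt hm.2
    · intro x hx
      exact ZMod.natCast_rightInverse x
    · intro m hm; rfl
  rw [h]
  have h2 : ∑ x ∈ (Finset.univ : Finset (ZMod p)) \ {0}, (x⁻¹) ^ kk
      = ∑ x ∈ (Finset.univ : Finset (ZMod p)), (x⁻¹) ^ kk := by
    rw [Finset.sum_sdiff_eq_sub (Finset.subset_univ _)]
    simp [zero_pow h0.ne']
  rw [h2]
  have h3 : ∑ x : ZMod p, (x⁻¹) ^ kk = ∑ x : ZMod p, x ^ kk :=
    Fintype.sum_bijective (·⁻¹) inv_involutive.bijective _ _ (fun x => rfl)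
  rw [h3]
  have hcard : Fintype.card (ZMod p) = p := ZMod.card p
  have := FiniteField.sum_pow_lt_card_sub_one (K := ZMod p) kk (by rw [hcard]; omega)
  exact this

def injFinset (n b : ℕ) : Finset (Fin n → ℕ) :=
  (Fintype.piFinset fun _ : Fin n => Finset.Ico 1 b).filter Function.Injective

def D (p n : ℕ) (k : Fin n → ℕ) (b : ℕ) : ZMod p :=
  ∑ f ∈ injFinset n b, ∏ i, ((f i : ZMod p)⁻¹) ^ (k i)

theorem mem_injFinset {n b : ℕ} {f : Fin n → ℕ} :
    f ∈ injFinset n b ↔ (∀ i, f i ∈ Finset.Ico 1 b) ∧ Function.Injective f := by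
  simp [injFinset, Fintype.mem_piFinset]

theorem D_zero (p : ℕ) (k : Fin 0 → ℕ) (b : ℕ) : D p 0 k b = 1 := by
  have h : injFinset 0 b = {(fun i => i.elim0 : Fin 0 → ℕ)} := by
    ext f
    simp only [mem_injFinset, Finset.mem_singleton]
    constructor
    · intro _; exact Subsingleton.elim _ _
    · rintro rfl; exact ⟨fun i => i.elim0, fun x => x.elim0⟩
  simp [D, h]

theorem prod_update_pow (p n : ℕ) (g : Fin n → ℕ) (e : Fin n → ℕ) (j : Fin n) (v : ℕ) :
    ((g j : ZMod p)⁻¹) ^ v * ∏ i, ((g i : ZMod p)⁻¹) ^ (e i)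
      = ∏ i, ((g i : ZMod p)⁻¹) ^ (Function.update e j (e j + v) i) := by
  classical
  have h : (fun i => ((g i : ZMod p)⁻¹) ^ (Function.update e j (e j + v) i))
      = Function.update (fun i => ((g i : ZMod p)⁻¹) ^ (e i)) j (((g j : ZMod p)⁻¹) ^ (e j + v)) := by
    funext i
    by_cases hij : i = j
    · subst hij; simp
    · simp [Function.update_of_ne hij]
  rw [h, Finset.prod_update_of_mem (Finset.mem_univ j),
    ← Finset.prod_erase_mul _ _ (Finset.mem_univ j)]
  rw [pow_add]
  rw [Finset.erase_eq]
  ring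

-- collision recursion (remove index 0)
theorem D_collision (p n : ℕ) (k : Fin (n + 1) → ℕ) (b : ℕ) :
    D p (n + 1) k b =
      (∑ m ∈ Finset.Ico 1 b, ((m : ZMod p)⁻¹) ^ (k 0)) * D p n (k ∘ Fin.succ) b
        - ∑ j : Fin n,
            D p n (Function.update (k ∘ Fin.succ) j (k j.succ + k 0)) b := by
  classical
  have key : D p (n + 1) k b =
      ∑ g ∈ injFinset n b, ∑ m ∈ Finset.Ico 1 b \ Finset.univ.image g,
        ((m : ZMod p)⁻¹) ^ (k 0) * ∏ i, ((g i : ZMod p)⁻¹) ^ (k i.succ) := by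
    rw [D, Finset.sum_sigma']
    refine Finset.sum_nbij' (i := fun f => ⟨f ∘ Fin.succ, f 0⟩)
      (j := fun x => Fin.cons x.2 x.1) ?_ ?_ ?_ ?_ ?_
    · intro f hf
      rw [mem_injFinset] at hf
      obtain ⟨hmem, hinj⟩ := hf
      refine Finset.mem_sigma.mpr ⟨?_, ?_⟩
      · rw [mem_injFinset]
        exact ⟨fun i => hmem i.succ, hinj.comp (Fin.succ_injective n)⟩
      · rw [Finset.mem_sdiff]
        refine ⟨hmem 0, ?_⟩
        simp only [Finset.mem_image, Finset.mem_univ, true_and, Function.comp_apply,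
          not_exists]
        intro j hj
        exact (Fin.succ_ne_zero j) (hinj hj)
    · rintro ⟨g, m⟩ hx
      rw [Finset.mem_sigma, mem_injFinset, Finset.mem_sdiff] at hx
      obtain ⟨⟨hmem, hinj⟩, hm, hmim⟩ := hx
      rw [mem_injFinset]
      constructor
      · intro i
        refine Fin.cases ?_ ?_ i
        · simpa using hm
        · intro j; simpa using hmem j
      · intro x y hxy
        rcases Fin.eq_zero_or_eq_succ x with rfl | ⟨x', rfl⟩ <;>
          rcases Fin.eq_zero_or_eq_succ y with rfl | ⟨y', rfl⟩
        · rfl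
        · exfalso
          simp only [Fin.cons_zero, Fin.cons_succ] at hxy
          exact hmim (Finset.mem_image.mpr ⟨y', Finset.mem_univ _, hxy.symm⟩)
        · exfalso
          simp only [Fin.cons_zero, Fin.cons_succ] at hxy
          exact hmim (Finset.mem_image.mpr ⟨x', Finset.mem_univ _, hxy⟩)
        · simp only [Fin.cons_succ] at hxy
          rw [hinj hxy]
    · intro f hf; funext x; refine Fin.cases ?_ ?_ x <;> simp
    · rintro ⟨g, m⟩ hx
      have h1 : (Fin.cons m g : Fin (n+1) → ℕ) ∘ Fin.succ = g := by
        funext j; simp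
      simp [h1]
    · intro f hf
      rw [Fin.prod_univ_succ]
      rfl
  rw [key]
  have step : ∀ g ∈ injFinset n b,
      ∑ m ∈ Finset.Ico 1 b \ Finset.univ.image g,
        ((m : ZMod p)⁻¹) ^ (k 0) * ∏ i, ((g i : ZMod p)⁻¹) ^ (k i.succ)
      = (∑ m ∈ Finset.Ico 1 b, ((m : ZMod p)⁻¹) ^ (k 0)) * ∏ i, ((g i : ZMod p)⁻¹) ^ (k i.succ)
        - ∑ j : Fin n, ∏ i, ((g i : ZMod p)⁻¹) ^ (Function.update (k ∘ Fin.succ) j (k j.succ + k 0) i) := by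
    intro g hg
    rw [mem_injFinset] at hg
    obtain ⟨hmem, hinj⟩ := hg
    rw [← Finset.sum_mul, Finset.sum_sdiff_eq_sub (by
      intro m hm
      simp only [Finset.mem_image, Finset.mem_univ, true_and] at hm
      obtain ⟨j, rfl⟩ := hm
      exact hmem j)]
    rw [Finset.sum_image (fun x _ y _ h => hinj h)]
    rw [sub_mul]
    congr 1
    rw [Finset.sum_mul]
    exact Finset.sum_congr rfl fun j _ => prod_update_pow p n g (k ∘ Fin.succ) j (k 0)
  rw [Finset.sum_congr rfl step, Finset.sum_sub_distrib, ← Finset.mul_sum]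
  rw [Finset.sum_comm]
  rfl

theorem D_step (p n b : ℕ) (hb : 1 ≤ b) (k : Fin (n + 1) → ℕ) :
    D p (n + 1) k (b + 1) = D p (n + 1) k b
      + ∑ i : Fin (n + 1), ((b : ZMod p)⁻¹) ^ (k i) * D p n (k ∘ i.succAbove) b := by
  classical
  set P : (Fin (n+1) → ℕ) → ZMod p := fun f => ∏ x, ((f x : ZMod p)⁻¹) ^ (k x) with hP
  have split := Finset.sum_filter_add_sum_filter_not (injFinset (n+1) (b+1))
    (fun f => ∀ i, f i ≠ b) P
  have h1 : (injFinset (n+1) (b+1)).filter (fun f => ∀ i, f i ≠ b) = injFinset (n+1) b := by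
    ext f
    simp only [Finset.mem_filter, mem_injFinset, Finset.mem_Ico]
    constructor
    · rintro ⟨⟨hmem, hinj⟩, hne⟩
      exact ⟨fun i => by have := hmem i; have := hne i; omega, hinj⟩
    · rintro ⟨hmem, hinj⟩
      exact ⟨⟨fun i => by have := hmem i; omega, hinj⟩, fun i => by have := hmem i; omega⟩
  have h2 : ∀ i : Fin (n+1),
      ∑ f ∈ (injFinset (n+1) (b+1)).filter (fun f => f i = b), P f
        = ((b : ZMod p)⁻¹) ^ (k i) * D p n (k ∘ i.succAbove) b := by
    intro i
    rw [D, Finset.mul_sum]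
    refine Finset.sum_nbij' (i := fun f => f ∘ i.succAbove) (j := fun g => i.insertNth b g)
      ?_ ?_ ?_ ?_ ?_
    · intro f hf
      rw [Finset.mem_filter, mem_injFinset] at hf
      obtain ⟨⟨hmem, hinj⟩, hfi⟩ := hf
      rw [mem_injFinset]
      refine ⟨fun j => ?_, hinj.comp (Fin.succAbove_right_injective)⟩
      have hne : f (i.succAbove j) ≠ b := by
        rw [← hfi]; exact fun hc => (Fin.succAbove_ne i j) (hinj hc)
      have hm2 := Finset.mem_Ico.mp (hmem (i.succAbove j))
      simp only [Function.comp_apply, Finset.mem_Ico]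
      omega
    · intro g hg
      rw [mem_injFinset] at hg
      obtain ⟨hmem, hinj⟩ := hg
      have hglt : ∀ j, g j < b := fun j => (Finset.mem_Ico.mp (hmem j)).2
      rw [Finset.mem_filter, mem_injFinset]
      refine ⟨⟨?_, ?_⟩, by simp⟩
      · intro x
        refine Fin.succAboveCases i ?_ ?_ x
        · simp only [Fin.insertNth_apply_same, Finset.mem_Ico]; omega
        · intro j
          simp only [Fin.insertNth_apply_succAbove, Finset.mem_Ico]
          have := Finset.mem_Ico.mp (hmem j); omega
      · intro x y hxy
        by_cases hx : x = i <;> by_cases hy : y = i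
        · rw [hx, hy]
        · exfalso
          obtain ⟨j, rfl⟩ := Fin.exists_succAbove_eq hy
          simp only [hx, Fin.insertNth_apply_same, Fin.insertNth_apply_succAbove] at hxy
          exact absurd hxy.symm (hglt j).ne
        · exfalso
          obtain ⟨j, rfl⟩ := Fin.exists_succAbove_eq hx
          simp only [hy, Fin.insertNth_apply_same, Fin.insertNth_apply_succAbove] at hxy
          exact absurd hxy (hglt j).ne
        · obtain ⟨j, rfl⟩ := Fin.exists_succAbove_eq hx
          obtain ⟨j', rfl⟩ := Fin.exists_succAbove_eq hy
          simp only [Fin.insertNth_apply_succAbove] at hxy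
          rw [hinj hxy]
    · intro f hf
      rw [Finset.mem_filter] at hf
      funext x
      refine Fin.succAboveCases i ?_ (fun j => ?_) x
      · simp [hf.2]
      · simp
    · intro g hg
      funext j
      simp
    · intro f hf
      rw [Finset.mem_filter] at hf
      rw [hP]
      simp only
      rw [Fin.prod_univ_succAbove (fun x => ((f x : ZMod p)⁻¹) ^ (k x)) i, hf.2]
      rfl
  have h3 : ∑ f ∈ (injFinset (n+1) (b+1)).filter (fun f => ¬ ∀ i, f i ≠ b), P f
      = ∑ i : Fin (n+1), ((b : ZMod p)⁻¹) ^ (k i) * D p n (k ∘ i.succAbove) b := by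
    have huniq : ∀ f ∈ (injFinset (n+1) (b+1)).filter (fun f => ¬ ∀ i, f i ≠ b),
        P f = ∑ i : Fin (n+1), if f i = b then P f else 0 := by
      intro f hf
      rw [Finset.mem_filter, mem_injFinset] at hf
      obtain ⟨⟨hmem, hinj⟩, hex⟩ := hf
      push_neg at hex
      obtain ⟨i0, hi0⟩ := hex
      have heq : ∀ i, (f i = b) ↔ (i = i0) :=
        fun i => ⟨fun h => hinj (h.trans hi0.symm), fun h => h ▸ hi0⟩
      simp only [heq]
      simp
    rw [Finset.sum_congr rfl huniq, Finset.sum_comm]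
    refine Finset.sum_congr rfl fun i _ => ?_
    rw [← Finset.sum_filter, Finset.filter_filter]
    rw [← h2 i]
    congr 1
    ext f
    simp only [Finset.mem_filter]
    constructor
    · rintro ⟨hf, _, hb'⟩; exact ⟨hf, hb'⟩
    · rintro ⟨hf, hb'⟩
      exact ⟨hf, fun hall => (hall i) hb', hb'⟩
  rw [D, ← split, h1, h3]
  rfl

def F (p n : ℕ) (k : Fin n → ℕ) (b : ℕ) : ZMod p :=
  ∑ σ : Equiv.Perm (Fin n), zetaSum p (List.ofFn (fun i => k (σ i))) b

-- permutation invariance of F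
theorem F_perm (p n : ℕ) (k : Fin n → ℕ) (e : Equiv.Perm (Fin n)) (b : ℕ) :
    F p n (k ∘ e) b = F p n k b := by
  refine Fintype.sum_bijective (fun σ => e * σ) (Group.mulLeft_bijective e) _ _ fun σ => rfl

-- comp of range-equal injections
theorem comp_perm_of_range_eq {n : ℕ} {β : Type*} {u v : Fin n → β}
    (hu : Function.Injective u) (hv : Function.Injective v)
    (h : Set.range u = Set.range v) : ∃ e : Equiv.Perm (Fin n), ∀ j, u j = v (e j) := by
  refine ⟨(Equiv.ofInjective u hu).trans ((Equiv.setCongr h).trans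
    (Equiv.ofInjective v hv).symm), fun j => ?_⟩
  simp only [Equiv.trans_apply]
  have h2 := Equiv.apply_ofInjective_symm hv
    ((Equiv.setCongr h) ((Equiv.ofInjective u hu) j))
  rw [h2]
  simp [Equiv.ofInjective_apply]

theorem swap_succ_eq_succAbove {n : ℕ} (i : Fin (n + 1)) :
    ∃ e : Equiv.Perm (Fin n), ∀ j, Equiv.swap 0 i (Fin.succ j) = i.succAbove (e j) := by
  have hu : Function.Injective (fun j : Fin n => Equiv.swap 0 i (Fin.succ j)) :=
    (Equiv.injective _).comp (Fin.succ_injective n)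
  have hrange : Set.range (fun j : Fin n => Equiv.swap 0 i (Fin.succ j))
      = Set.range i.succAbove := by
    have : (fun j : Fin n => Equiv.swap 0 i (Fin.succ j))
        = (Equiv.swap 0 i : Fin (n+1) → Fin (n+1)) ∘ Fin.succ := rfl
    rw [this, Set.range_comp, Fin.range_succ, Fin.range_succAbove,
      Set.image_compl_eq (Equiv.bijective _), Set.image_singleton, Equiv.swap_apply_left]
  exact comp_perm_of_range_eq hu (Fin.succAbove_right_injective) hrange

theorem D_zero' (p : ℕ) (k : Fin 0 → ℕ) (b : ℕ) : D p 0 k b = 1 := by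
  have h : injFinset 0 b = {(fun i => i.elim0 : Fin 0 → ℕ)} := by
    ext f
    simp only [mem_injFinset, Finset.mem_singleton]
    constructor
    · intro _; exact Subsingleton.elim _ _
    · rintro rfl; exact ⟨fun i => i.elim0, fun x => x.elim0⟩
  simp [D, h]

theorem F_zero' (p : ℕ) (k : Fin 0 → ℕ) (b : ℕ) : F p 0 k b = 1 := by
  rw [F]
  rw [show (Finset.univ : Finset (Equiv.Perm (Fin 0))) = {1} from Finset.eq_singleton_iff_unique_mem.mpr ⟨Finset.mem_univ _, fun e _ => Subsingleton.elim _ _⟩]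
  simp [List.ofFn_zero, zetaSum]

theorem F_bot (p n : ℕ) (k : Fin (n+1) → ℕ) (b : ℕ) (hb : Finset.Ico 1 b = ∅) :
    F p (n+1) k b = 0 := by
  rw [F]
  refine Finset.sum_eq_zero fun σ _ => ?_
  rw [List.ofFn_succ]
  simp [zetaSum, hb]

theorem D_bot (p n : ℕ) (k : Fin (n+1) → ℕ) (b : ℕ) (hb : Finset.Ico 1 b = ∅) :
    D p (n+1) k b = 0 := by
  rw [D]
  refine Finset.sum_eq_zero fun f hf => ?_
  exfalso
  rw [mem_injFinset] at hf
  have := hf.1 0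
  rw [hb] at this
  simpa using this

theorem F_eq_D (p : ℕ) : ∀ (b n : ℕ) (k : Fin n → ℕ), F p n k b = D p n k b := by
  intro b
  induction b with
  | zero =>
    intro n k
    match n with
    | 0 => rw [F_zero', D_zero']
    | n + 1 => rw [F_bot p n k 0 rfl, D_bot p n k 0 rfl]
  | succ b ih =>
    intro n k
    match n with
    | 0 => rw [F_zero', D_zero']
    | n + 1 =>
      rcases Nat.eq_zero_or_pos b with rfl | hb
      · rw [F_bot p n k 1 rfl, D_bot p n k 1 rfl]
      have expand : ∀ σ : Equiv.Perm (Fin (n+1)),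
          zetaSum p (List.ofFn fun i => k (σ i)) (b+1)
            = zetaSum p (List.ofFn fun i => k (σ i)) b
              + ((b : ZMod p)⁻¹) ^ (k (σ 0))
                * zetaSum p (List.ofFn fun i : Fin n => k (σ i.succ)) b := by
        intro σ
        rw [List.ofFn_succ]
        show zetaSum p _ (b+1) = _
        rw [zetaSum, Finset.sum_Ico_succ_top hb, ← zetaSum]
      rw [F, Finset.sum_congr rfl (fun σ _ => expand σ), Finset.sum_add_distrib]
      rw [← F, ih (n+1) k, D_step p n b hb k]
      congr 1
      rw [← Equiv.sum_comp (Equiv.Perm.decomposeFin.symm)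
        (fun σ => ((b : ZMod p)⁻¹) ^ (k (σ 0))
          * zetaSum p (List.ofFn fun i : Fin n => k (σ i.succ)) b)]
      rw [Fintype.sum_prod_type]
      refine Finset.sum_congr rfl fun i _ => ?_
      simp only [Equiv.Perm.decomposeFin_symm_apply_zero,
        Equiv.Perm.decomposeFin_symm_apply_succ]
      rw [← Finset.mul_sum]
      congr 1
      obtain ⟨e, he⟩ := swap_succ_eq_succAbove i
      have hc : (fun j : Fin n => k (Equiv.swap 0 i j.succ)) = (k ∘ i.succAbove) ∘ e := by
        funext j
        simp [he j]
      have : (∑ τ : Equiv.Perm (Fin n),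
          zetaSum p (List.ofFn fun j : Fin n => k (Equiv.swap 0 i (τ j).succ)) b)
          = F p n (fun j : Fin n => k (Equiv.swap 0 i j.succ)) b := rfl
      rw [this, hc, F_perm, ih n (k ∘ i.succAbove)]

theorem D_vanish (p : ℕ) [Fact p.Prime] [NeZero p] :
    ∀ (n : ℕ) (k : Fin (n + 1) → ℕ), (∀ i, 1 ≤ k i) → (∑ i, k i) + 1 < p →
      D p (n + 1) k p = 0 := by
  intro n
  induction n with
  | zero =>
    intro k hk hsum
    rw [D_collision, D_zero']
    have h1 : (∑ i, k i) = k 0 := by simp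
    rw [h1] at hsum
    rw [sumS_eq_zero p (k 0) (hk 0) (by omega)]
    simp
  | succ n ih =>
    intro k hk hsum
    have htot : k 0 + (∑ i : Fin (n+1), k i.succ) + 1 < p := by
      rw [Fin.sum_univ_succ] at hsum; omega
    rw [D_collision]
    rw [ih (k ∘ Fin.succ) (fun i => hk i.succ) (by
      simp only [Function.comp_apply]; omega)]
    have hupd : ∀ j : Fin (n+1),
        D p (n+1) (Function.update (k ∘ Fin.succ) j (k j.succ + k 0)) p = 0 := by
      intro j
      apply ih
      · intro i
        by_cases hij : i = j
        · subst hij; simp only [Function.update_self]; have := hk i.succ; omega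
        · rw [Function.update_of_ne hij]; exact hk i.succ
      · have hsplit : ∑ i : Fin (n+1), (k ∘ Fin.succ) i
            = k j.succ + ∑ i ∈ Finset.univ.erase j, (k ∘ Fin.succ) i := by
          rw [← Finset.add_sum_erase _ _ (Finset.mem_univ j)]
          rfl
        rw [Finset.sum_update_of_mem (Finset.mem_univ j)]
        simp only [Function.comp_apply, Finset.sdiff_singleton_eq_erase] at hsplit ⊢
        omega
    rw [Finset.sum_congr rfl (fun j _ => hupd j)]
    simp

end AuxMZV


/-- The sum of `ζ_𝒜` over all permutations of the exponents vanishes. -/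
theorem sum_perm_zetaA (n : ℕ) (hn : 1 ≤ n) (k : Fin n → ℕ) (hk : ∀ i, 0 < k i) :
    ∑ σ : Equiv.Perm (Fin n), zetaA (List.ofFn (fun i => k (σ i))) = 0 := by
  obtain ⟨m, rfl⟩ : ∃ m, n = m + 1 := ⟨n - 1, by omega⟩
  rw [show (∑ σ : Equiv.Perm (Fin (m+1)), zetaA (List.ofFn (fun i => k (σ i))))
      = Ideal.Quotient.mk nullIdeal
          (∑ σ : Equiv.Perm (Fin (m+1)),
            (fun p : Nat.Primes => zetaSum p (List.ofFn (fun i => k (σ i))) p)) from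
    (map_sum (Ideal.Quotient.mk nullIdeal) _ _).symm]
  rw [Ideal.Quotient.eq_zero_iff_mem]
  show {q : Nat.Primes |
      (∑ σ : Equiv.Perm (Fin (m+1)),
        (fun p : Nat.Primes => zetaSum p (List.ofFn (fun i => k (σ i))) p)) q ≠ 0}.Finite
  refine Set.Finite.subset (Set.Finite.preimage
    (Set.injOn_of_injective Subtype.val_injective)
    (Set.finite_Iic ((∑ i, k i) + 1))) ?_
  intro q hq
  by_contra hc
  simp only [Set.mem_preimage, Set.mem_Iic, not_le] at hc
  apply hq
  haveI : Fact (Nat.Prime q) := ⟨q.2⟩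
  haveI : NeZero (q : ℕ) := ⟨q.2.pos.ne'⟩
  erw [Finset.sum_apply]
  show (∑ σ : Equiv.Perm (Fin (m+1)),
      zetaSum (q : ℕ) (List.ofFn fun i => k (σ i)) (q : ℕ)) = 0
  have hF : (∑ σ : Equiv.Perm (Fin (m+1)),
      zetaSum (q : ℕ) (List.ofFn fun i => k (σ i)) (q : ℕ)) = F (q : ℕ) (m+1) k (q : ℕ) := rfl
  rw [hF, F_eq_D (q : ℕ) (q : ℕ) (m+1) k, D_vanish (q : ℕ) m k (fun i => hk i) hc]
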